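/- The number of connected endofunctions on {1,...,n} of girth k equals n(n-1)···(n-k+1) · n^(n-k-1), for 1 ≤ k ≤ n. -/

import Mathlib

set_option linter.unusedSectionVars false
set_option linter.unusedVariables false

def ConnFun {n : ℕ} (f : Fin n → Fin n) : Prop :=
  Nonempty (Fin n) ∧ ∀ i j, Relation.EqvGen (fun a b => f a = b) i j

noncomputable def girth {n : ℕ} (f : Fin n → Fin n) : ℕ :=
  Nat.card {x : Fin n // ∃ m, 0 < m ∧ f^[m] x = x}
open Function





section Base
variable {α : Type*} [Finite α] {f : α → α}

/-- On a finite type, every point eventually reaches a periodic point. -/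
lemma exists_iterate_mem_periodicPts (f : α → α) (x : α) :
    ∃ j, f^[j] x ∈ periodicPts f := by
  obtain ⟨i, j, hne, hij⟩ := Finite.exists_ne_map_eq_of_infinite (fun i : ℕ => f^[i] x)
  wlog hlt : i < j generalizing i j
  · exact this j i hne.symm hij.symm (by omega)
  refine ⟨i, j - i, by omega, ?_⟩
  show f^[j-i] (f^[i] x) = f^[i] x
  rw [← Function.iterate_add_apply]
  rw [show j - i + i = j by omega]
  exact hij.symm

lemma injOn_periodicPts (f : α → α) : Set.InjOn f (periodicPts f) :=
  (bijOn_periodicPts f).injOn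

/-- If `x` is outside an `f`-invariant set `C` but some iterate of `x` lies in `C`,
then `x` is not periodic. -/
lemma not_mem_periodicPts_of_reach {C : Set α} (hC : Set.MapsTo f C C) {x : α}
    (hx : x ∉ C) {a : ℕ} (ha : f^[a] x ∈ C) : x ∉ periodicPts f := by
  intro hper
  have hinv : ∀ b, f^[b] (f^[a] x) ∈ C := by
    intro b
    induction b with
    | zero => exact ha
    | succ b ih => rw [Function.iterate_succ_apply']; exact hC ih
  obtain ⟨p, hp, hpx⟩ := hper
  have hmul : ∀ t, f^[p * t] x = x := by
    intro t
    induction t with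
    | zero => simp
    | succ t ih => rw [Nat.mul_succ, Function.iterate_add_apply, hpx, ih]
  have : f^[p * (a + 1)] x ∈ C := by
    have hle : a + 1 ≤ p * (a + 1) := Nat.le_mul_of_pos_left _ hp
    have h1 : p * (a + 1) = (p * (a+1) - a) + a := by omega
    rw [h1, Function.iterate_add_apply]
    exact hinv _
  rw [hmul] at this
  exact hx this

/-- A point of a finite set mapped injectively into itself is periodic. -/
lemma mem_periodicPts_of_mapsTo {U : Set α} (hm : Set.MapsTo f U U)
    (hi : Set.InjOn f U) {x : α} (hx : x ∈ U) : x ∈ periodicPts f := by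
  have horb : ∀ b, f^[b] x ∈ U := by
    intro b
    induction b with
    | zero => exact hx
    | succ b ih => rw [Function.iterate_succ_apply']; exact hm ih
  obtain ⟨i, j, hne, hij⟩ := Finite.exists_ne_map_eq_of_infinite (fun i : ℕ => f^[i] x)
  wlog hlt : i < j generalizing i j
  · exact this j i hne.symm hij.symm (by omega)
  refine ⟨j - i, by omega, ?_⟩
  -- cancel i steps using injectivity on U
  have key : ∀ i', f^[i'] (f^[j-i] x) = f^[i'] x → f^[j-i] x = x := by
    intro i'
    induction i' with
    | zero => simp
    | succ i' ih =>
      rw [Function.iterate_succ_apply', Function.iterate_succ_apply']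
      intro h
      refine ih (hi ?_ ?_ h)
      · rw [← Function.iterate_add_apply]; exact horb _
      · exact horb _
  refine key i ?_
  rw [← Function.iterate_add_apply, show i + (j - i) = j by omega]
  exact hij.symm

lemma eqvGen_iff (f : α → α) (x y : α) :
    Relation.EqvGen (fun a b => f a = b) x y ↔ ∃ a b, f^[a] x = f^[b] y := by
  constructor
  · intro h
    induction h with
    | rel a b hab => exact ⟨1, 0, by simp [hab]⟩
    | refl a => exact ⟨0, 0, rfl⟩
    | symm a b _ ih => obtain ⟨u, v, h⟩ := ih; exact ⟨v, u, h.symm⟩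
    | trans a b c _ _ ih1 ih2 =>
      obtain ⟨u, v, h1⟩ := ih1
      obtain ⟨u', v', h2⟩ := ih2
      refine ⟨u' + u, v' + v, ?_⟩
      have h1' : f^[u'] (f^[u] a) = f^[u'] (f^[v] b) := by rw [h1]
      rw [Function.iterate_add_apply, h1', ← Function.iterate_add_apply,
        Nat.add_comm u' v, Function.iterate_add_apply, h2,
        ← Function.iterate_add_apply, Nat.add_comm v v']
  · rintro ⟨a, b, h⟩
    have step : ∀ (c : ℕ) (z : α), Relation.EqvGen (fun a b => f a = b) z (f^[c] z) := by
      intro c z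
      induction c with
      | zero => exact Relation.EqvGen.refl z
      | succ c ih =>
        refine Relation.EqvGen.trans _ _ _ ih ?_
        rw [Function.iterate_succ_apply']
        exact Relation.EqvGen.rel _ _ rfl
    exact Relation.EqvGen.trans _ _ _ (step a x) (h ▸ (step b y).symm _ _)

end Base


noncomputable section Construction
open Classical
open Fin.NatCast
variable {n k : ℕ} [NeZero k] (s : Fin k ↪ Fin n) (g : Fin n → Fin n)

/-- The periodic points of `g` outside the designated cycle `range s`. -/
def Dset : Finset (Fin n) :=
  Finset.univ.filter (fun x => x ∈ periodicPts g ∧ x ∉ Set.range s)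

def mD : ℕ := (Dset s g).card

def tD : Fin (mD s g) → Fin n := fun j => ((Dset s g).orderIsoOfFin rfl j : Fin n)

def wD : Fin (mD s g) → Fin n := fun j => g (tD s g j)

/-- The constructed endofunction: cycle on `range s`, a chain linking the extra
periodic points of `g` into the cycle, and `g` elsewhere. -/
def Fc : Fin n → Fin n := fun x =>
  if hx : ∃ i, s i = x then s (Classical.choose hx + 1)
  else if hd : ∃ j, wD s g j = x then
    (if _h0 : (Classical.choose hd).val = 0 then s 0
     else wD s g ⟨(Classical.choose hd).val - 1,
        by have := (Classical.choose hd).isLt; omega⟩)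
  else g x

/-- The marked vertex. -/
def vD : Fin n :=
  if h : mD s g = 0 then s 0 else wD s g ⟨mD s g - 1, by omega⟩

lemma tD_mem (j : Fin (mD s g)) : tD s g j ∈ Dset s g :=
  ((Dset s g).orderIsoOfFin rfl j).2

lemma tD_injective : Function.Injective (tD s g) := by
  intro a b h
  have := Subtype.ext (p := fun x => x ∈ Dset s g) h
  exact ((Dset s g).orderIsoOfFin rfl).injective this

lemma mem_Dset {x : Fin n} : x ∈ Dset s g ↔ x ∈ periodicPts g ∧ x ∉ Set.range s := by
  simp [Dset]

variable {s g} (hg : ∀ i, g (s i) = s i)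
include hg

lemma s_mem_periodicPts (i : Fin k) : s i ∈ periodicPts g :=
  ⟨1, Nat.one_pos, by exact hg i⟩

lemma wD_mem (j : Fin (mD s g)) : wD s g j ∈ Dset s g := by
  have ht := (mem_Dset s g).1 (tD_mem s g j)
  rw [mem_Dset]
  constructor
  · exact (bijOn_periodicPts g).mapsTo ht.1
  · rintro ⟨i, hi⟩
    apply ht.2
    have : g (s i) = g (tD s g j) := by rw [hg i, hi]; rfl
    have := injOn_periodicPts g (s_mem_periodicPts hg i) ht.1 this
    exact ⟨i, this⟩

lemma wD_injective : Function.Injective (wD s g) := by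
  intro a b h
  have ha := (mem_Dset s g).1 (tD_mem s g a)
  have hb := (mem_Dset s g).1 (tD_mem s g b)
  exact tD_injective s g (injOn_periodicPts g ha.1 hb.1 h)

lemma wD_surj {x : Fin n} (hx : x ∈ Dset s g) : ∃ j, wD s g j = x := by
  have hbij : Function.Bijective (fun j : Fin (mD s g) => (⟨wD s g j, wD_mem hg j⟩ :
      {y // y ∈ Dset s g})) := by
    rw [Fintype.bijective_iff_injective_and_card]
    constructor
    · intro a b h
      exact wD_injective hg (congrArg Subtype.val h)
    · simp [mD, Fintype.card_coe]
      exact (Fintype.card_congr' rfl).trans (Fintype.card_fin _)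
  obtain ⟨j, hj⟩ := hbij.2 ⟨x, hx⟩
  exact ⟨j, congrArg Subtype.val hj⟩



lemma wD_not_mem_range (j : Fin (mD s g)) : wD s g j ∉ Set.range s :=
  ((mem_Dset s g).1 (wD_mem hg j)).2

lemma Fc_s (i : Fin k) : Fc s g (s i) = s (i + 1) := by
  have hx : ∃ i', s i' = s i := ⟨i, rfl⟩
  rw [Fc, dif_pos hx]
  congr 1
  have := Classical.choose_spec hx
  exact congrArg (· + 1) (s.injective this)

lemma Fc_w (j : Fin (mD s g)) :
    Fc s g (wD s g j) = if _h : (j : ℕ) = 0 then s 0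
      else wD s g ⟨(j : ℕ) - 1, by have := j.isLt; omega⟩ := by
  have hx : ¬ ∃ i, s i = wD s g j := by
    rintro ⟨i, hi⟩; exact wD_not_mem_range hg j ⟨i, hi⟩
  have hd : ∃ j', wD s g j' = wD s g j := ⟨j, rfl⟩
  rw [Fc, dif_neg hx, dif_pos hd]
  have hcj : Classical.choose hd = j := wD_injective hg (Classical.choose_spec hd)
  have key : ∀ (j' : Fin (mD s g)) (_h : j' = j),
      (if _h0 : (j' : ℕ) = 0 then s 0
        else wD s g ⟨(j' : ℕ) - 1, by have := j'.isLt; omega⟩)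
      = if _h : (j : ℕ) = 0 then s 0
        else wD s g ⟨(j : ℕ) - 1, by have := j.isLt; omega⟩ := by
    intro j' h; subst h; rfl
  exact key _ hcj

lemma Fc_other {x : Fin n} (hx : x ∉ Set.range s) (hx2 : x ∉ Dset s g) :
    Fc s g x = g x := by
  have h1 : ¬ ∃ i, s i = x := by rintro ⟨i, hi⟩; exact hx ⟨i, hi⟩
  have h2 : ¬ ∃ j, wD s g j = x := by
    rintro ⟨j, hj⟩; exact hx2 (hj ▸ wD_mem hg j)
  rw [Fc, dif_neg h1, dif_neg h2]

lemma Fc_iter_s (a : ℕ) (i : Fin k) : (Fc s g)^[a] (s i) = s (i + (a : Fin k)) := by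
  induction a generalizing i with
  | zero => simp
  | succ a ih =>
    rw [Function.iterate_succ_apply, Fc_s hg, ih]
    congr 1
    push_cast
    abel

lemma Fc_iter_w {a : ℕ} {j : Fin (mD s g)} (ha : a ≤ (j : ℕ)) :
    (Fc s g)^[a] (wD s g j) = wD s g ⟨(j : ℕ) - a, by have := j.isLt; omega⟩ := by
  induction a generalizing j with
  | zero => simp
  | succ a ih =>
    rw [Function.iterate_succ_apply, Fc_w hg, dif_neg (by omega)]
    rw [ih (j := ⟨(j : ℕ) - 1, by have := j.isLt; omega⟩) (by simp; omega)]
    congr 1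
    simp
    omega

lemma Fc_chain (j : Fin (mD s g)) : (Fc s g)^[(j : ℕ) + 1] (wD s g j) = s 0 := by
  rw [show (j:ℕ) + 1 = 1 + (j:ℕ) by omega, Function.iterate_add_apply,
    Fc_iter_w hg (le_refl _), Function.iterate_one, Fc_w hg]
  rw [dif_pos (by simp)]

lemma Fc_reach_s0 (x : Fin n) : ∃ a, (Fc s g)^[a] x = s 0 := by
  -- first: points of `range s` reach `s 0`
  have hS : ∀ i : Fin k, ∃ a, (Fc s g)^[a] (s i) = s 0 := by
    intro i
    refine ⟨k - (i : ℕ), ?_⟩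
    rw [Fc_iter_s hg]
    congr 1
    have h1 : ((i : ℕ) + (k - (i : ℕ)) : ℕ) = k := by
      have := i.isLt; omega
    have h2 : i + (((k - (i:ℕ)) : ℕ) : Fin k) = (((i:ℕ) + (k - (i:ℕ)) : ℕ) : Fin k) := by
      push_cast [Fin.cast_val_eq_self]
      rfl
    rw [h2, h1, Fin.natCast_self]
  -- points of `Dset` reach `s 0`
  have hD : ∀ x ∈ Dset s g, ∃ a, (Fc s g)^[a] x = s 0 := by
    intro x hx
    obtain ⟨j, hj⟩ := wD_surj hg hx
    exact ⟨(j : ℕ) + 1, by rw [← hj, Fc_chain hg]⟩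
  -- general: by induction on the time for `g` to reach its periodic points
  obtain ⟨b, hb⟩ := exists_iterate_mem_periodicPts g x
  clear hb
  -- strong statement: if g^[b] x ∈ periodicPts g then reach
  suffices H : ∀ (b : ℕ) (x : Fin n), g^[b] x ∈ periodicPts g →
      ∃ a, (Fc s g)^[a] x = s 0 by
    obtain ⟨b', hb'⟩ := exists_iterate_mem_periodicPts g x
    exact H b' x hb'
  intro b
  induction b with
  | zero =>
    intro x hx
    by_cases hxs : x ∈ Set.range s
    · obtain ⟨i, rfl⟩ := hxs; exact hS i
    · exact hD x ((mem_Dset s g).2 ⟨hx, hxs⟩)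
  | succ b ih =>
    intro x hx
    by_cases hxs : x ∈ Set.range s
    · obtain ⟨i, rfl⟩ := hxs; exact hS i
    · by_cases hxd : x ∈ Dset s g
      · exact hD x hxd
      · have hfx : Fc s g x = g x := Fc_other hg hxs hxd
        rw [Function.iterate_succ_apply] at hx
        obtain ⟨a, ha⟩ := ih (g x) hx
        exact ⟨a + 1, by rw [Function.iterate_add_apply, Function.iterate_one, hfx, ha]⟩

lemma Fc_periodicPts : periodicPts (Fc s g) = Set.range s := by
  apply Set.eq_of_subset_of_subset
  · intro x hx
    by_contra hxs
    obtain ⟨a, ha⟩ := Fc_reach_s0 hg x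
    have hmaps : Set.MapsTo (Fc s g) (Set.range s) (Set.range s) := by
      rintro y ⟨i, rfl⟩
      exact ⟨i + 1, (Fc_s hg i).symm⟩
    exact not_mem_periodicPts_of_reach hmaps hxs (by rw [ha]; exact ⟨0, rfl⟩) hx
  · rintro x ⟨i, rfl⟩
    refine ⟨k, Nat.pos_of_ne_zero (NeZero.ne k), ?_⟩
    show (Fc s g)^[k] (s i) = s i
    rw [Fc_iter_s hg]
    congr 1
    simp

end Construction

noncomputable section Inverse
open Classical
variable {n k : ℕ} [NeZero k] (f : Fin n → Fin n) (v : Fin n)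

/-- Time for `v` to reach the periodic points of `f`. -/
def hitT : ℕ := Nat.find (exists_iterate_mem_periodicPts f v)

def cpt : Fin n := f^[hitT f v] v

/-- The recovered cycle enumeration. -/
def sIf : Fin k → Fin n := fun i => f^[(i : ℕ)] (cpt f v)

lemma cpt_mem : cpt f v ∈ periodicPts f :=
  Nat.find_spec (exists_iterate_mem_periodicPts f v)

lemma not_per_of_lt_hit {j : ℕ} (hj : j < hitT f v) : f^[j] v ∉ periodicPts f :=
  Nat.find_min _ hj

lemma orbit_inj_of_le_hit {i j : ℕ} (hi : i < hitT f v) (hj : j ≤ hitT f v)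
    (hij : f^[i] v = f^[j] v) : i = j := by
  by_contra hne
  rcases Nat.lt_or_ge i j with h | h
  · apply not_per_of_lt_hit f v hi
    refine ⟨j - i, by omega, ?_⟩
    show f^[j-i] (f^[i] v) = f^[i] v
    rw [← Function.iterate_add_apply, show j - i + i = j by omega]
    exact hij.symm
  · have h' : j < i := by omega
    apply not_per_of_lt_hit f v (lt_of_lt_of_le h' (le_of_lt hi))
    refine ⟨i - j, by omega, ?_⟩
    show f^[i-j] (f^[j] v) = f^[j] v
    rw [← Function.iterate_add_apply, show i - j + j = i by omega]
    exact hij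

/-- The pre-periodic orbit of `v`. -/
def DI : Finset (Fin n) :=
  (Finset.univ : Finset (Fin (hitT f v))).image (fun j : Fin (hitT f v) => f^[(j : ℕ)] v)

lemma orbitmap_inj : Function.Injective (fun j : Fin (hitT f v) => f^[(j : ℕ)] v) := by
  intro a b hab
  exact Fin.ext (orbit_inj_of_le_hit f v a.isLt (le_of_lt b.isLt) hab)

lemma card_DI : (DI f v).card = hitT f v := by
  rw [DI, Finset.card_image_of_injective _ (orbitmap_inj f v), Finset.card_univ,
    Fintype.card_fin]

lemma mem_DI {x : Fin n} : x ∈ DI f v ↔ ∃ j < hitT f v, f^[j] v = x := by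
  constructor
  · intro hx
    obtain ⟨j, -, hj⟩ := Finset.mem_image.1 hx
    exact ⟨j, j.isLt, hj⟩
  · rintro ⟨j, hj, hjx⟩
    exact Finset.mem_image.2 ⟨⟨j, hj⟩, Finset.mem_univ _, hjx⟩

lemma DI_not_per {x : Fin n} (hx : x ∈ DI f v) : x ∉ periodicPts f := by
  obtain ⟨j, hj, rfl⟩ := (mem_DI f v).1 hx
  exact not_per_of_lt_hit f v hj

/-- The chain enumeration of `DI`, from the cycle attachment back to `v`. -/
def wI : Fin (hitT f v) → Fin n := fun j => f^[hitT f v - 1 - (j : ℕ)] v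

lemma wI_mem (j : Fin (hitT f v)) : wI f v j ∈ DI f v :=
  (mem_DI f v).2 ⟨hitT f v - 1 - (j : ℕ), by have := j.isLt; omega, rfl⟩

/-- The recovered function `g`. -/
def gI : Fin n → Fin n := fun x =>
  if x ∈ periodicPts f then x
  else if hx : x ∈ DI f v then
    wI f v (((DI f v).orderIsoOfFin (card_DI f v)).symm ⟨x, hx⟩)
  else f x

lemma gI_per {x : Fin n} (hx : x ∈ periodicPts f) : gI f v x = x := by
  rw [gI, if_pos hx]

lemma gI_DI {x : Fin n} (hx : x ∈ DI f v) :
    gI f v x = wI f v (((DI f v).orderIsoOfFin (card_DI f v)).symm ⟨x, hx⟩) := by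
  rw [gI, if_neg (DI_not_per f v hx), dif_pos hx]

lemma gI_other {x : Fin n} (hx : x ∉ periodicPts f) (hx2 : x ∉ DI f v) :
    gI f v x = f x := by
  rw [gI, if_neg hx, dif_neg hx2]

section WithHyp
variable (hc : ∀ x y : Fin n, Relation.EqvGen (fun a b => f a = b) x y)
include hc

lemma periodicPts_eq_orbit :
    periodicPts f =
      Set.range (fun i : Fin (minimalPeriod f (cpt f v)) => f^[(i : ℕ)] (cpt f v)) := by
  set c := cpt f v with hcdef
  set p := minimalPeriod f c with hpdef
  have hc_per : c ∈ periodicPts f := cpt_mem f v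
  have hp_pos : 0 < p := minimalPeriod_pos_of_mem_periodicPts hc_per
  apply Set.eq_of_subset_of_subset
  · intro x hx
    obtain ⟨a, b, hab⟩ := (eqvGen_iff f c x).1 (hc c x)
    obtain ⟨q, hq, hqx⟩ := hx
    -- x = f^[b*(q-1)] (f^[b] x) = f^[b*(q-1)+a] c
    have hmul : ∀ t : ℕ, f^[q * t] x = x := by
      intro t
      induction t with
      | zero => simp
      | succ t ih => rw [Nat.mul_succ, Function.iterate_add_apply, hqx.eq, ih]
    have hbq : f^[b * q] x = x := by
      rw [show b * q = q * b by ring, hmul]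
    have hx_eq : x = f^[b * q - b + a] c := by
      have h1 : b * q - b + b = b * q := by
        have := Nat.le_mul_of_pos_right b hq
        omega
      rw [Function.iterate_add_apply, hab, ← Function.iterate_add_apply, h1, hbq]
    refine ⟨⟨(b * q - b + a) % p, Nat.mod_lt _ hp_pos⟩, ?_⟩
    show f^[(b * q - b + a) % p] c = x
    rw [hpdef, iterate_mod_minimalPeriod_eq, ← hx_eq]
  · rintro x ⟨i, rfl⟩
    exact mk_mem_periodicPts hp_pos ((isPeriodicPt_minimalPeriod f c).apply_iterate _)

lemma minimalPeriod_cpt_eq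
    (hgirth : Nat.card {x : Fin n // ∃ m, 0 < m ∧ f^[m] x = x} = k) :
    minimalPeriod f (cpt f v) = k := by
  set c := cpt f v with hcdef
  set p := minimalPeriod f c with hpdef
  have horb := periodicPts_eq_orbit f v hc
  have hinj : Function.Injective (fun i : Fin p => f^[(i : ℕ)] c) := by
    intro a b hab
    exact Fin.ext (iterate_injOn_Iio_minimalPeriod (f := f) (x := c) a.isLt b.isLt hab)
  have h1 : Nat.card {x : Fin n // ∃ m, 0 < m ∧ f^[m] x = x} =
      Nat.card (periodicPts f) := by
    apply Nat.card_congr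
    apply Equiv.subtypeEquivRight
    intro x
    rw [mem_periodicPts]
    rfl
  rw [h1, horb, Nat.card_range_of_injective hinj, Nat.card_eq_fintype_card,
    Fintype.card_fin] at hgirth
  exact hgirth

end WithHyp
end Inverse

section OrdIso
variable {β : Type*} [LinearOrder β]

lemma orderIsoOfFin_congr {D₁ D₂ : Finset β} (hD : D₁ = D₂) {m₁ m₂ : ℕ}
    (h₁ : D₁.card = m₁) (h₂ : D₂.card = m₂) (j₁ : Fin m₁) (j₂ : Fin m₂)
    (hj : (j₁ : ℕ) = (j₂ : ℕ)) :
    (D₁.orderIsoOfFin h₁ j₁ : β) = (D₂.orderIsoOfFin h₂ j₂ : β) := by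
  subst hD
  have hm : m₁ = m₂ := by omega
  subst hm
  have : j₁ = j₂ := Fin.ext hj
  subst this
  rfl

end OrdIso

noncomputable section Roundtrip1
open Classical
variable {n k : ℕ} [NeZero k] {s : Fin k ↪ Fin n} {g : Fin n → Fin n}
  (hg : ∀ i, g (s i) = s i)
include hg

lemma vD_iter_lt {j : ℕ} (hj : j < mD s g) :
    (Fc s g)^[j] (vD s g) = wD s g ⟨mD s g - 1 - j, by omega⟩ := by
  rw [vD, dif_neg (by omega : ¬ mD s g = 0)]
  rw [Fc_iter_w hg (by simp; omega)]

lemma vD_iter_m : (Fc s g)^[mD s g] (vD s g) = s 0 := by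
  by_cases hm : mD s g = 0
  · rw [hm, vD, dif_pos hm]
    simp
  · rw [vD, dif_neg hm]
    have := Fc_chain hg (j := ⟨mD s g - 1, by omega⟩)
    simpa [show mD s g - 1 + 1 = mD s g by omega] using this

lemma hit_Fc : hitT (Fc s g) (vD s g) = mD s g := by
  rw [hitT, Nat.find_eq_iff]
  constructor
  · rw [vD_iter_m hg, Fc_periodicPts hg]
    exact ⟨0, rfl⟩
  · intro j hj
    rw [vD_iter_lt hg hj, Fc_periodicPts hg]
    exact wD_not_mem_range hg _

lemma cpt_Fc : cpt (Fc s g) (vD s g) = s 0 := by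
  rw [cpt, hit_Fc hg, vD_iter_m hg]

lemma sIf_Fc (i : Fin k) : sIf (Fc s g) (vD s g) i = s i := by
  rw [sIf, cpt_Fc hg, Fc_iter_s hg]
  congr 1
  rw [Fin.cast_val_eq_self]
  exact zero_add i

lemma DI_Fc : DI (Fc s g) (vD s g) = Dset s g := by
  ext x
  rw [mem_DI, hit_Fc hg]
  constructor
  · rintro ⟨j, hj, rfl⟩
    rw [vD_iter_lt hg hj]
    exact wD_mem hg _
  · intro hx
    obtain ⟨j', rfl⟩ := wD_surj hg hx
    refine ⟨mD s g - 1 - (j' : ℕ), by have := j'.isLt; omega, ?_⟩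
    rw [vD_iter_lt hg (by have := j'.isLt; omega)]
    congr 1
    apply Fin.ext
    simp
    have := j'.isLt
    omega

lemma gI_Fc : gI (Fc s g) (vD s g) = g := by
  funext x
  by_cases hxs : x ∈ Set.range s
  · rw [gI_per _ _ (by rw [Fc_periodicPts hg]; exact hxs)]
    obtain ⟨i, rfl⟩ := hxs
    exact (hg i).symm
  · by_cases hxd : x ∈ Dset s g
    · have hxDI : x ∈ DI (Fc s g) (vD s g) := by rw [DI_Fc hg]; exact hxd
      rw [gI_DI _ _ hxDI]
      set F := Fc s g
      set v := vD s g
      set J := ((DI F v).orderIsoOfFin (card_DI F v)).symm ⟨x, hxDI⟩ with hJ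
      have hJlt : (J : ℕ) < mD s g :=
        lt_of_lt_of_le J.isLt (le_of_eq (hit_Fc hg))
      have hmpos : mD s g ≠ 0 := by omega
      -- identify x with tD at index J
      have hx_eq : tD s g ⟨(J : ℕ), hJlt⟩ = x := by
        have h1 : ((DI F v).orderIsoOfFin (card_DI F v) J : Fin n) = x := by
          rw [hJ, OrderIso.apply_symm_apply]
        rw [← h1]
        exact (orderIsoOfFin_congr (DI_Fc hg) (card_DI F v) rfl J ⟨(J : ℕ), hJlt⟩ rfl).symm
      -- compute both sides
      have hwI : wI F v J = wD s g ⟨(J : ℕ), hJlt⟩ := by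
        have hh : hitT F v = mD s g := hit_Fc hg
        have h3 : wI F v J = F^[mD s g - 1 - (J : ℕ)] v := by
          rw [wI]
          congr 1
          omega
        rw [h3, vD_iter_lt hg (by omega)]
        congr 1
        apply Fin.ext
        simp
        omega
      rw [hwI, ← hx_eq]
      rfl
    · rw [gI_other _ _ (by rw [Fc_periodicPts hg]; exact hxs)
        (by rw [DI_Fc hg]; exact hxd)]
      exact Fc_other hg hxs hxd

lemma vD_Fc_eq : vD s g = vD s g := rfl

end Roundtrip1

noncomputable section Roundtrip2
open Classical
variable {n k : ℕ} [NeZero k] (f : Fin n → Fin n) (v : Fin n)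

lemma sIf_mem_periodicPts (i : Fin k) : sIf f v i ∈ periodicPts f :=
  mk_mem_periodicPts (minimalPeriod_pos_of_mem_periodicPts (cpt_mem f v))
    ((isPeriodicPt_minimalPeriod f (cpt f v)).apply_iterate _)

lemma gI_fix (i : Fin k) : gI f v (sIf f v i) = sIf f v i :=
  gI_per f v (sIf_mem_periodicPts f v i)

lemma wI_injective : Function.Injective (wI f v) := by
  intro a b hab
  have ha := a.isLt
  have hb := b.isLt
  have h := orbit_inj_of_le_hit f v (i := hitT f v - 1 - (a : ℕ))
    (j := hitT f v - 1 - (b : ℕ)) (by omega) (by omega) hab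
  exact Fin.ext (by omega)

lemma periodicPts_gI : periodicPts (gI f v) = periodicPts f ∪ ↑(DI f v) := by
  have hmaps : Set.MapsTo (gI f v) (periodicPts f ∪ ↑(DI f v))
      (periodicPts f ∪ ↑(DI f v)) := by
    rintro x (hx | hx)
    · rw [gI_per f v hx]; exact Or.inl hx
    · rw [gI_DI f v hx]; exact Or.inr (wI_mem f v _)
  apply Set.eq_of_subset_of_subset
  · intro x hx
    by_contra hxc
    have hreach : ∃ a, (gI f v)^[a] x ∈ periodicPts f ∪ ↑(DI f v) := by
      suffices H : ∀ (b : ℕ) (y : Fin n), f^[b] y ∈ periodicPts f →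
          ∃ a, (gI f v)^[a] y ∈ periodicPts f ∪ ↑(DI f v) by
        obtain ⟨b, hb⟩ := exists_iterate_mem_periodicPts f x
        exact H b x hb
      intro b
      induction b with
      | zero => intro y hy; exact ⟨0, Or.inl hy⟩
      | succ b ih =>
        intro y hy
        by_cases hy1 : y ∈ periodicPts f
        · exact ⟨0, Or.inl hy1⟩
        · by_cases hy2 : y ∈ DI f v
          · exact ⟨0, Or.inr hy2⟩
          · rw [Function.iterate_succ_apply] at hy
            obtain ⟨a, ha⟩ := ih (f y) hy
            refine ⟨a + 1, ?_⟩
            rwa [Function.iterate_add_apply, Function.iterate_one,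
              gI_other f v hy1 hy2]
    obtain ⟨a, ha⟩ := hreach
    exact not_mem_periodicPts_of_reach hmaps hxc ha hx
  · rintro x (hx | hx)
    · exact ⟨1, Nat.one_pos, by show (gI f v)^[1] x = x; simpa using gI_per f v hx⟩
    · refine mem_periodicPts_of_mapsTo (U := ↑(DI f v)) ?_ ?_ hx
      · intro y hy
        rw [gI_DI f v hy]
        exact wI_mem f v _
      · intro y hy z hz hyz
        rw [gI_DI f v hy, gI_DI f v hz] at hyz
        have h1 := wI_injective f v hyz
        have h2 := congrArg (((DI f v).orderIsoOfFin (card_DI f v))) h1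
        rw [OrderIso.apply_symm_apply, OrderIso.apply_symm_apply] at h2
        exact congrArg Subtype.val h2

section WithHyp2
variable (hc : ∀ x y : Fin n, Relation.EqvGen (fun a b => f a = b) x y)
  (hgirth : Nat.card {x : Fin n // ∃ m, 0 < m ∧ f^[m] x = x} = k)
include hc hgirth

lemma sIf_injective : Function.Injective (sIf f v : Fin k → Fin n) := by
  have hp := minimalPeriod_cpt_eq f v hc hgirth
  intro a b hab
  refine Fin.ext (iterate_injOn_Iio_minimalPeriod (f := f) (x := cpt f v)
    ?_ ?_ hab)
  · rw [hp]; exact a.isLt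
  · rw [hp]; exact b.isLt

lemma range_sIf : Set.range (sIf f v : Fin k → Fin n) = periodicPts f := by
  have hp := minimalPeriod_cpt_eq f v hc hgirth
  rw [periodicPts_eq_orbit f v hc, hp]
  rfl

/-- The recovered cycle as an embedding. -/
def sIe : Fin k ↪ Fin n := ⟨sIf f v, sIf_injective f v hc hgirth⟩

lemma Dset_gI : Dset (sIe f v hc hgirth) (gI f v) = DI f v := by
  ext x
  rw [mem_Dset]
  constructor
  · rintro ⟨hx1, hx2⟩
    rw [periodicPts_gI] at hx1
    rcases hx1 with h | h
    · exact absurd (by rw [sIe, Function.Embedding.coeFn_mk, range_sIf f v hc hgirth]; exact h) hx2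
    · exact h
  · intro hx
    constructor
    · rw [periodicPts_gI]; exact Or.inr hx
    · rw [sIe, Function.Embedding.coeFn_mk, range_sIf f v hc hgirth]
      exact DI_not_per f v hx

lemma mD_gI : mD (sIe f v hc hgirth) (gI f v) = hitT f v := by
  rw [mD, Dset_gI, card_DI]

lemma wD_gI (j : Fin (mD (sIe f v hc hgirth) (gI f v))) :
    wD (sIe f v hc hgirth) (gI f v) j = f^[hitT f v - 1 - (j : ℕ)] v := by
  have hjlt : (j : ℕ) < hitT f v := lt_of_lt_of_le j.isLt (le_of_eq (mD_gI f v hc hgirth))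
  have htD : tD (sIe f v hc hgirth) (gI f v) j ∈ DI f v := by
    rw [← Dset_gI f v hc hgirth]
    exact tD_mem _ _ j
  rw [wD, tD] at *
  rw [gI_DI f v htD]
  -- identify the index
  have hval : ((DI f v).orderIsoOfFin (card_DI f v) ⟨(j : ℕ), hjlt⟩ : Fin n)
      = ((Dset (sIe f v hc hgirth) (gI f v)).orderIsoOfFin rfl j : Fin n) :=
    orderIsoOfFin_congr (Dset_gI f v hc hgirth).symm (card_DI f v) rfl _ j rfl
  have hsymm : ((DI f v).orderIsoOfFin (card_DI f v)).symm
      ⟨((Dset (sIe f v hc hgirth) (gI f v)).orderIsoOfFin rfl j : Fin n), htD⟩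
      = ⟨(j : ℕ), hjlt⟩ := by
    apply ((DI f v).orderIsoOfFin (card_DI f v)).injective
    rw [OrderIso.apply_symm_apply]
    apply Subtype.ext
    exact hval.symm
  rw [hsymm]
  rfl

lemma Fc_gI : Fc (sIe f v hc hgirth) (gI f v) = f := by
  have hg : ∀ i, gI f v (sIe f v hc hgirth i) = sIe f v hc hgirth i :=
    fun i => gI_fix f v i
  have hp := minimalPeriod_cpt_eq f v hc hgirth
  funext x
  by_cases hxs : x ∈ Set.range (sIe f v hc hgirth)
  · obtain ⟨i, rfl⟩ := hxs
    rw [Fc_s hg]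
    show f^[((i + 1 : Fin k) : ℕ)] (cpt f v) = f (f^[((i : Fin k) : ℕ)] (cpt f v))
    rw [← Function.iterate_succ_apply' f ((i : Fin k) : ℕ) (cpt f v)]
    rw [← iterate_mod_minimalPeriod_eq (f := f) (x := cpt f v) (n := (i : ℕ) + 1), hp]
    congr 1
    rw [Fin.add_def]
    have h1 : ((1 : Fin k) : ℕ) = 1 % k := rfl
    rw [h1]
    conv_rhs => rw [Nat.add_mod]
    rw [Nat.mod_eq_of_lt i.isLt]
  · by_cases hxd : x ∈ Dset (sIe f v hc hgirth) (gI f v)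
    · obtain ⟨j, rfl⟩ := wD_surj hg hxd
      have hjlt : (j : ℕ) < hitT f v :=
        lt_of_lt_of_le j.isLt (le_of_eq (mD_gI f v hc hgirth))
      rw [Fc_w hg, wD_gI f v hc hgirth j]
      by_cases h0 : (j : ℕ) = 0
      · rw [dif_pos h0]
        have h1 : f (f^[hitT f v - 1 - (j : ℕ)] v) = f^[hitT f v] v := by
          rw [← Function.iterate_succ_apply' f (hitT f v - 1 - (j : ℕ)) v]
          congr 1
          omega
        rw [h1]
        show f^[((0 : Fin k) : ℕ)] (cpt f v) = f^[hitT f v] v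
        simp [cpt]
      · rw [dif_neg h0, wD_gI f v hc hgirth]
        rw [← Function.iterate_succ_apply' f (hitT f v - 1 - (j : ℕ)) v]
        congr 1
        show hitT f v - 1 - ((j : ℕ) - 1) = (hitT f v - 1 - (j : ℕ)) + 1
        omega
    · rw [Fc_other hg hxs hxd]
      apply gI_other f v
      · rw [← range_sIf f v hc hgirth]
        exact hxs
      · rw [← Dset_gI f v hc hgirth]
        exact hxd

lemma vD_gI : vD (sIe f v hc hgirth) (gI f v) = v := by
  have hm : mD (sIe f v hc hgirth) (gI f v) = hitT f v := mD_gI f v hc hgirth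
  by_cases h0 : mD (sIe f v hc hgirth) (gI f v) = 0
  · rw [vD, dif_pos h0]
    show f^[((0 : Fin k) : ℕ)] (cpt f v) = v
    simp only [Fin.val_zero, Function.iterate_zero_apply]
    rw [cpt, show hitT f v = 0 by omega]
    rfl
  · rw [vD, dif_neg h0]
    rw [wD_gI f v hc hgirth]
    show f^[hitT f v - 1 - (mD (sIe f v hc hgirth) (gI f v) - 1)] v = v
    rw [show hitT f v - 1 - (mD (sIe f v hc hgirth) (gI f v) - 1) = 0 by omega]
    rfl

end WithHyp2
end Roundtrip2

noncomputable section Final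
open Classical
variable {n k : ℕ} [NeZero k]

lemma connFun_Fc {s : Fin k ↪ Fin n} {g : Fin n → Fin n} (hg : ∀ i, g (s i) = s i) :
    ConnFun (Fc s g) := by
  refine ⟨⟨s 0⟩, fun i j => ?_⟩
  rw [eqvGen_iff]
  obtain ⟨a, ha⟩ := Fc_reach_s0 hg i
  obtain ⟨b, hb⟩ := Fc_reach_s0 hg j
  exact ⟨a, b, by rw [ha, hb]⟩

lemma girth_Fc {s : Fin k ↪ Fin n} {g : Fin n → Fin n} (hg : ∀ i, g (s i) = s i) :
    girth (Fc s g) = k := by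
  rw [girth]
  have h1 : Nat.card {x : Fin n // ∃ m, 0 < m ∧ (Fc s g)^[m] x = x}
      = Nat.card (periodicPts (Fc s g)) := by
    apply Nat.card_congr
    apply Equiv.subtypeEquivRight
    intro x
    rw [mem_periodicPts]
    rfl
  rw [h1, Fc_periodicPts hg, Nat.card_range_of_injective s.injective,
    Nat.card_eq_fintype_card, Fintype.card_fin]

/-- The master bijection. -/
def mainEquiv (n k : ℕ) [NeZero k] :
    {p : (Fin k ↪ Fin n) × (Fin n → Fin n) // ∀ i, p.2 (p.1 i) = p.1 i} ≃
      {f : Fin n → Fin n // ConnFun f ∧ girth f = k} × Fin n where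
  toFun p := (⟨Fc p.1.1 p.1.2, connFun_Fc p.2, girth_Fc p.2⟩, vD p.1.1 p.1.2)
  invFun q :=
    ⟨(sIe q.1.1 q.2 (fun x y => q.1.2.1.2 x y) q.1.2.2, gI q.1.1 q.2),
      fun i => gI_fix q.1.1 q.2 i⟩
  left_inv := by
    rintro ⟨⟨s, g⟩, hg⟩
    apply Subtype.ext
    refine Prod.ext ?_ ?_
    · apply DFunLike.ext
      intro i
      exact sIf_Fc hg i
    · exact gI_Fc hg
  right_inv := by
    rintro ⟨⟨f, hcf, hgf⟩, v⟩
    refine Prod.ext (Subtype.ext ?_) ?_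
    · exact Fc_gI f v (fun x y => hcf.2 x y) hgf
    · exact vD_gI f v (fun x y => hcf.2 x y) hgf

lemma card_fiber (hkn : k ≤ n) (s : Fin k ↪ Fin n) :
    Nat.card {g : Fin n → Fin n // ∀ i, g (s i) = s i} = n ^ (n - k) := by
  have e3 : {g : Fin n → Fin n // ∀ i, g (s i) = s i} ≃
      ({x : Fin n // x ∉ Set.range s} → Fin n) :=
    { toFun := fun g x => g.1 x.1
      invFun := fun h => ⟨fun x => if hx : x ∈ Set.range s then x else h ⟨x, hx⟩, by
        intro i
        show (if hx : s i ∈ Set.range s then s i else h ⟨s i, hx⟩) = s i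
        rw [dif_pos ⟨i, rfl⟩]⟩
      left_inv := by
        rintro ⟨g, hgp⟩
        apply Subtype.ext
        funext x
        show (if hx : x ∈ Set.range s then x else g x) = g x
        split_ifs with hx
        · obtain ⟨i, rfl⟩ := hx
          exact (hgp i).symm
        · rfl
      right_inv := by
        intro h
        funext x
        show (if hx : (x : Fin n) ∈ Set.range s then (x : Fin n) else h ⟨x, hx⟩) = h x
        rw [dif_neg x.2] }
  have hA : Nat.card {x : Fin n // x ∈ Set.range s} = k := by
    have h := Nat.card_range_of_injective s.injective
    rwa [Nat.card_eq_fintype_card (α := Fin k), Fintype.card_fin] at h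
  have hA' : Fintype.card {x : Fin n // x ∈ Set.range s} = k := by
    rw [← Nat.card_eq_fintype_card]
    exact hA
  have hC : Nat.card {x : Fin n // x ∉ Set.range s} = n - k := by
    rw [Nat.card_eq_fintype_card, Fintype.card_subtype_compl, Fintype.card_fin, hA']
  rw [Nat.card_congr e3, Nat.card_fun, hC, Nat.card_eq_fintype_card (α := Fin n),
    Fintype.card_fin]

lemma card_B (hkn : k ≤ n) :
    Nat.card {p : (Fin k ↪ Fin n) × (Fin n → Fin n) // ∀ i, p.2 (p.1 i) = p.1 i}
      = n.descFactorial k * n ^ (n - k) := by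
  have e2 : {p : (Fin k ↪ Fin n) × (Fin n → Fin n) // ∀ i, p.2 (p.1 i) = p.1 i} ≃
      Σ s : Fin k ↪ Fin n, {g : Fin n → Fin n // ∀ i, g (s i) = s i} :=
    { toFun := fun p => ⟨p.1.1, p.1.2, p.2⟩
      invFun := fun q => ⟨(q.1, q.2.1), q.2.2⟩
      left_inv := fun p => rfl
      right_inv := fun q => rfl }
  rw [Nat.card_congr e2, Nat.card_eq_fintype_card, Fintype.card_sigma]
  have hsum : ∀ s : Fin k ↪ Fin n,
      Fintype.card {g : Fin n → Fin n // ∀ i, g (s i) = s i} = n ^ (n - k) := by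
    intro s
    rw [← Nat.card_eq_fintype_card]
    exact card_fiber hkn s
  rw [Finset.sum_congr rfl (fun s _ => hsum s), Finset.sum_const, smul_eq_mul,
    Finset.card_univ, Fintype.card_embedding_eq, Fintype.card_fin, Fintype.card_fin]

end Final

/-- The number of connected endofunctions on `{1,…,n}` of girth `k` equals
`n(n-1)⋯(n-k+1)·n^(n-k-1)` (stated multiplied through by `n`). -/
theorem stmt7 (n k : ℕ) (hk : 1 ≤ k) (hkn : k ≤ n) :
    Nat.card {f : Fin n → Fin n // ConnFun f ∧ girth f = k} * n =
      n.descFactorial k * n ^ (n - k) := by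
  have : NeZero k := ⟨by omega⟩
  have h1 : Nat.card {f : Fin n → Fin n // ConnFun f ∧ girth f = k} * n
      = Nat.card ({f : Fin n → Fin n // ConnFun f ∧ girth f = k} × Fin n) := by
    rw [Nat.card_prod, Nat.card_eq_fintype_card (α := Fin n), Fintype.card_fin]
  rw [h1, ← Nat.card_congr (mainEquiv n k), card_B hkn]
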